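/- arXiv:2504.18188 — 6 statements merged into one kernel-verified Lean document; each statement's English description precedes it below -/
import Mathlib

section
/- Let π be a permutation of a finite set X and let (x₁, y₁), ..., (x_k, y_k) be disjoint pairs (the x_i are pairwise distinct and the y_i are pairwise distinct). Then for any permutation σ of {1, ..., k}, the iterated reprogramming is order-independent: π[x₁ → y₁]...[x_k → y_k] = π[x_{σ(1)} → y_{σ(1)}]...[x_{σ(k)} → y_{σ(k)}]. -/
open Equiv Finset
open scoped Classical

variable {X : Type*} [DecidableEq X] [Fintype X]

/-- Pointwise definition of the reprogrammed function `π[x → y]`. -/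
def reprogFun (π : Equiv.Perm X) (x y : X) (z : X) : X :=
  if z = x then y else if z = π.symm y then π x else π z

/-- Reprogramming of a permutation: `π[x → y] = π ∘ (x  π⁻¹(y))`. -/
def reprog (π : Equiv.Perm X) (x y : X) : Equiv.Perm X :=
  π * Equiv.swap x (π.symm y)

/-- Iterated reprogramming over a list of pairs, applied left to right. -/
def reprogList (π : Equiv.Perm X) (ps : List (X × X)) : Equiv.Perm X :=
  ps.foldl (fun σ p => reprog σ p.1 p.2) π

/-- Iterated reprogramming `π[x₁ → y₁]...[x_k → y_k]` over vectors of pairs. -/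
def reprogVec {k : ℕ} (π : Equiv.Perm X) (x y : Fin k → X) : Equiv.Perm X :=
  (List.finRange k).foldl (fun σ i => reprog σ (x i) (y i)) π

/-- A tuple of pairs `(x i, y i)` is good w.r.t. `π`. -/
def IsGood {k : ℕ} (π : Equiv.Perm X) (x y : Fin k → X) : Prop :=
  Function.Injective x ∧ Function.Injective y ∧ ∀ i j, π (x i) ≠ y j

lemma reprog_apply (π : Equiv.Perm X) (x y z : X) :
    reprog π x y z = if z = x then y else if π z = y then π x else π z := by
  simp only [reprog, Equiv.Perm.mul_apply, Equiv.swap_apply_def]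
  split_ifs with h1 h2 h3 h4 <;>
    simp_all [Equiv.symm_apply_eq, Equiv.apply_eq_iff_eq_symm_apply]

lemma reprog_comm (π : Equiv.Perm X) {x1 y1 x2 y2 : X} (hx : x1 ≠ x2) (hy : y1 ≠ y2) :
    reprog (reprog π x1 y1) x2 y2 = reprog (reprog π x2 y2) x1 y1 := by
  ext z
  simp only [reprog_apply]
  split_ifs <;> simp_all <;> aesop

def Dis {X : Type*} (p q : X × X) : Prop := p.1 ≠ q.1 ∧ p.2 ≠ q.2

lemma reprogList_perm (π : Equiv.Perm X) {l l' : List (X × X)} (h : l.Perm l')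
    (hl : l.Pairwise Dis) : reprogList π l = reprogList π l' := by
  induction h generalizing π with
  | nil => rfl
  | cons p h ih =>
      simp only [reprogList, List.foldl_cons] at *
      exact ih _ (List.pairwise_cons.mp hl).2
  | swap p q l =>
      simp only [reprogList, List.foldl_cons]
      have hd : Dis q p := (List.pairwise_cons.mp hl).1 p (by simp)
      rw [reprog_comm _ hd.1 hd.2]
  | trans h1 h2 ih1 ih2 =>
      refine (ih1 π hl).trans (ih2 π ?_)
      exact h1.pairwise hl (fun hab => ⟨hab.1.symm, hab.2.symm⟩)

/-- For disjoint pairs, iterated reprogramming is order-independent. -/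
theorem reprogVec_perm {k : ℕ} (π : Equiv.Perm X) (x y : Fin k → X)
    (hx : Function.Injective x) (hy : Function.Injective y)
    (σ : Equiv.Perm (Fin k)) :
    reprogVec π x y = reprogVec π (x ∘ σ) (y ∘ σ) := by
  have e1 : reprogVec π x y = reprogList π ((List.finRange k).map fun i => (x i, y i)) := by
    simp [reprogVec, reprogList, List.foldl_map]
  have e2 : reprogVec π (x ∘ σ) (y ∘ σ) =
      reprogList π (((List.finRange k).map σ).map fun i => (x i, y i)) := by
    simp [reprogVec, reprogList, List.foldl_map, Function.comp]
  rw [e1, e2]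
  apply reprogList_perm
  · refine List.Perm.map _ ?_
    apply List.perm_of_nodup_nodup_toFinset_eq (List.nodup_finRange k)
      ((List.nodup_finRange k).map σ.injective)
    ext i
    simp only [List.mem_toFinset, List.mem_finRange, List.mem_map, true_iff]
    exact ⟨σ.symm i, trivial, by simp⟩
  · rw [List.pairwise_map]
    refine List.Pairwise.imp ?_ (List.nodup_finRange k)
    intro a b hab
    exact ⟨fun h => hab (hx h), fun h => hab (hy h)⟩
end

section
/- Let π be a permutation of a finite set X and (x₁*, y₁*), ..., (x_k*, y_k*) a good tuple with respect to π. Then π[x₁* → y₁*]...[x_{k-1}* → y_{k-1}*](x_k*) = π(x_k*); that is, reprogramming on the first k−1 pairs does not change the value of π at x_k*. -/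
open Equiv Finset
open scoped Classical

variable {X : Type*} [DecidableEq X] [Fintype X]

/-- Reprogramming on the first `k` pairs of a good `(k+1)`-tuple does not change
the value of `π` at the last input `x (Fin.last k)`. -/
theorem reprogVec_init_apply_last {k : ℕ} (π : Equiv.Perm X)
    (x y : Fin (k + 1) → X) (h : IsGood π x y) :
    reprogVec π (x ∘ Fin.castSucc) (y ∘ Fin.castSucc) (x (Fin.last k))
      = π (x (Fin.last k)) := by
  obtain ⟨hx, -, hπ⟩ := h
  suffices H : ∀ (l : List (Fin k)) (σ : Equiv.Perm X),
      σ (x (Fin.last k)) = π (x (Fin.last k)) →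
      (l.foldl (fun σ i => reprog σ ((x ∘ Fin.castSucc) i) ((y ∘ Fin.castSucc) i)) σ)
        (x (Fin.last k)) = π (x (Fin.last k)) by
    exact H (List.finRange k) π rfl
  intro l
  induction l with
  | nil => intro σ hσ; simpa using hσ
  | cons i l ih =>
    intro σ hσ
    simp only [List.foldl_cons]
    apply ih
    have h1 : x (Fin.last k) ≠ (x ∘ Fin.castSucc) i := by
      intro hc
      exact absurd (hx hc) (Fin.castSucc_lt_last i).ne'
    have h2 : x (Fin.last k) ≠ σ.symm ((y ∘ Fin.castSucc) i) := by
      intro hc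
      have : σ (x (Fin.last k)) = (y ∘ Fin.castSucc) i := by
        rw [hc]; simp
      rw [hσ] at this
      exact hπ (Fin.last k) (Fin.castSucc i) this
    rw [reprog, Equiv.Perm.mul_apply, Equiv.swap_apply_of_ne_of_ne h1 h2, hσ]
end

section
/- Let π be a permutation of a finite set X and (x₁*, y₁*), ..., (x_k*, y_k*) a good tuple with respect to π. Then (π[x₁* → y₁*]...[x_{k-1}* → y_{k-1}*])⁻¹(y_k*) = π⁻¹(y_k*). -/
open Equiv Finset
open scoped Classical

variable {X : Type*} [DecidableEq X] [Fintype X]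

lemma reprog_apply_of_ne (π : Equiv.Perm X) (a b z : X) (h1 : z ≠ a)
    (h2 : π z ≠ b) : reprog π a b z = π z := by
  have : z ≠ π.symm b := fun hz => h2 (by rw [hz]; simp)
  simp [reprog, Equiv.swap_apply_of_ne_of_ne h1 this]

lemma reprog_symm_apply_of_ne (π : Equiv.Perm X) (a b t : X) (h1 : π a ≠ t)
    (h2 : b ≠ t) : (reprog π a b).symm t = π.symm t := by
  have h1' : π.symm t ≠ a := fun hz => h1 (by rw [← hz]; simp)
  have h2' : π.symm t ≠ π.symm b := fun hz => h2 (π.symm.injective hz).symm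
  simp [reprog, Equiv.Perm.mul_def, Equiv.symm_trans_apply,
    Equiv.swap_apply_of_ne_of_ne h1' h2']

lemma reprogList_symm_aux (t : X) : ∀ (ps : List (X × X)) (π : Equiv.Perm X),
    ps.Pairwise (fun p q => p.1 ≠ q.1) →
    (∀ p ∈ ps, ∀ q ∈ ps, π p.1 ≠ q.2) →
    (∀ p ∈ ps, p.2 ≠ t) →
    (∀ p ∈ ps, π p.1 ≠ t) →
    (reprogList π ps).symm t = π.symm t := by
  intro ps
  induction ps with
  | nil => intro π _ _ _ _; rfl
  | cons p ps ih =>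
    intro π hpw hxy hyt hxt
    have hstep : ∀ q ∈ ps, (reprog π p.1 p.2) q.1 = π q.1 := by
      intro q hq
      exact reprog_apply_of_ne _ _ _ _
        (Ne.symm ((List.pairwise_cons.mp hpw).1 q hq))
        (hxy q (List.mem_cons_of_mem _ hq) p List.mem_cons_self)
    have : reprogList π (p :: ps) = reprogList (reprog π p.1 p.2) ps := rfl
    rw [this, ih (reprog π p.1 p.2) (List.pairwise_cons.mp hpw).2
      (fun q hq r hr => by
        rw [hstep q hq]
        exact hxy q (List.mem_cons_of_mem _ hq) r (List.mem_cons_of_mem _ hr))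
      (fun q hq => hyt q (List.mem_cons_of_mem _ hq))
      (fun q hq => by
        rw [hstep q hq]; exact hxt q (List.mem_cons_of_mem _ hq))]
    exact reprog_symm_apply_of_ne _ _ _ _ (hxt p List.mem_cons_self)
      (hyt p List.mem_cons_self)

/-- Reprogramming on the first `k` pairs of a good `(k+1)`-tuple does not change
the value of `π⁻¹` at the last output `y (Fin.last k)`. -/
theorem reprogVec_init_symm_apply_last {k : ℕ} (π : Equiv.Perm X)
    (x y : Fin (k + 1) → X) (h : IsGood π x y) :
    (reprogVec π (x ∘ Fin.castSucc) (y ∘ Fin.castSucc)).symm (y (Fin.last k))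
      = π.symm (y (Fin.last k)) := by
  obtain ⟨hx, hy, hxy⟩ := h
  have hvec : reprogVec π (x ∘ Fin.castSucc) (y ∘ Fin.castSucc)
      = reprogList π ((List.finRange k).map
          (fun i => (x (Fin.castSucc i), y (Fin.castSucc i)))) := by
    rw [reprogVec, reprogList, List.foldl_map]
    simp [Function.comp]
  rw [hvec]
  apply reprogList_symm_aux
  · rw [List.pairwise_map]
    refine List.Pairwise.imp ?_ (List.nodup_finRange k)
    intro i j hij hx'
    exact hij (Fin.castSucc_injective k (hx hx'))
  · simp only [List.mem_map]
    rintro p ⟨i, -, rfl⟩ q ⟨j, -, rfl⟩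
    exact hxy _ _
  · simp only [List.mem_map]
    rintro p ⟨i, -, rfl⟩
    intro he
    exact (Fin.castSucc_lt_last i).ne (hy he)
  · simp only [List.mem_map]
    rintro p ⟨i, -, rfl⟩
    exact hxy _ _
end

section
/- Let π be a permutation of a finite set X and (x₁*, y₁*), ..., (x_k*, y_k*) a good tuple with respect to π. Then π[x₁* → y₁*]...[x_k* → y_k*](π⁻¹(y_k*)) = π(x_k*). -/
open Equiv Finset
open scoped Classical

variable {X : Type*} [DecidableEq X] [Fintype X]

/-- On a good tuple, `π[x₁* → y₁*]...[x_k* → y_k*](π⁻¹(y_k*)) = π(x_k*)`. -/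
theorem reprogVec_apply_symm_last {k : ℕ} (π : Equiv.Perm X)
    (x y : Fin (k + 1) → X) (h : IsGood π x y) :
    reprogVec π x y (π.symm (y (Fin.last k))) = π (x (Fin.last k)) := by
  obtain ⟨hx, hy, hxy⟩ := h
  have hxy' : ∀ i j, x i ≠ π.symm (y j) := by
    intro i j hEq
    exact hxy i j (by rw [hEq, Equiv.apply_symm_apply])
  have H : ∀ L : List (Fin (k+1)), L.Nodup →
      (∀ j ∈ L, (L.foldl (fun σ i => reprog σ (x i) (y i)) π) (x j) = y j ∧
        (L.foldl (fun σ i => reprog σ (x i) (y i)) π) (π.symm (y j)) = π (x j)) ∧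
      (∀ z, (∀ j ∈ L, z ≠ x j ∧ z ≠ π.symm (y j)) →
        (L.foldl (fun σ i => reprog σ (x i) (y i)) π) z = π z) := by
    intro L
    induction L using List.reverseRecOn with
    | nil => simp
    | append_singleton L i ih =>
      intro hL
      rw [List.nodup_append] at hL
      obtain ⟨hL', -, hdisj⟩ := hL
      have hi : i ∉ L := fun hmem => hdisj i hmem i (List.mem_singleton_self i) rfl
      obtain ⟨ih1, ih2⟩ := ih hL'
      set σ := (L.foldl (fun σ i => reprog σ (x i) (y i)) π) with hσ
      have hfold : ((L ++ [i]).foldl (fun σ i => reprog σ (x i) (y i)) π)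
          = reprog σ (x i) (y i) := by
        rw [List.foldl_append]; rfl
      have hne : ∀ j ∈ L, j ≠ i := fun j hj hEq => hi (hEq ▸ hj)
      have hsymm : σ (π.symm (y i)) = y i := by
        rw [ih2]
        · exact π.apply_symm_apply (y i)
        · intro j hj
          refine ⟨fun hEq => hxy' j i hEq.symm, fun hEq => hne j hj ?_⟩
          exact hy (π.symm.injective hEq.symm)
      have hsymm' : σ.symm (y i) = π.symm (y i) :=
        (Equiv.symm_apply_eq σ).mpr hsymm.symm
      have happ : ∀ z, reprog σ (x i) (y i) z
          = σ (Equiv.swap (x i) (π.symm (y i)) z) := by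
        intro z
        rw [reprog, Equiv.Perm.mul_apply, hsymm']
      constructor
      · intro j hj
        rcases List.mem_append.mp hj with hj | hj
        · have hji := hne j hj
          constructor
          · rw [hfold, happ, Equiv.swap_apply_of_ne_of_ne
              (fun hEq => hji (hx hEq)) (hxy' j i)]
            exact (ih1 j hj).1
          · rw [hfold, happ, Equiv.swap_apply_of_ne_of_ne
              (fun hEq => hxy' i j hEq.symm)
              (fun hEq => hji (hy (π.symm.injective hEq)))]
            exact (ih1 j hj).2
        · rw [List.mem_singleton] at hj
          subst hj
          constructor
          · rw [hfold, happ, Equiv.swap_apply_left]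
            exact hsymm
          · rw [hfold, happ, Equiv.swap_apply_right]
            refine ih2 (x j) fun l hl => ⟨fun hEq => hne l hl (hx hEq).symm, hxy' j l⟩
      · intro z hz
        rw [hfold, happ, Equiv.swap_apply_of_ne_of_ne
          (hz i (List.mem_append_right _ (List.mem_singleton_self i))).1
          (hz i (List.mem_append_right _ (List.mem_singleton_self i))).2]
        exact ih2 z fun j hj => hz j (List.mem_append_left _ hj)
  exact ((H (List.finRange (k+1)) (List.nodup_finRange _)).1 (Fin.last k)
    (List.mem_finRange _)).2
end

section
/- Let x₁*, ..., x_k* ∈ X be pairwise distinct and let G[x⃗*] denote the set of pairs of permutations (π, π*) of X such that the tuple ((x₁*, π*(x₁*)), ..., (x_k*, π*(x_k*))) is good w.r.t. π. If (π, π*) is drawn uniformly from G[x⃗*] and y_j* := π*(x_j*), then the reprogrammed permutation π[x₁* → y₁*]...[x_k* → y_k*] is uniformly distributed over all permutations of X. -/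
open Equiv Finset
open scoped Classical

variable {X : Type*} [DecidableEq X] [Fintype X]

lemma reprog_mul (σ π : Equiv.Perm X) (x y : X) :
    reprog (σ * π) x (σ y) = σ * reprog π x y := by
  unfold reprog
  have h : (σ * π).symm (σ y) = π.symm y := by
    rw [Equiv.symm_apply_eq]
    simp [Equiv.Perm.mul_apply]
  rw [h, mul_assoc]

lemma foldl_mul {k : ℕ} (σ : Equiv.Perm X) (x y : Fin k → X) (l : List (Fin k)) :
    ∀ π : Equiv.Perm X,
      l.foldl (fun s i => reprog s (x i) (σ (y i))) (σ * π)
        = σ * l.foldl (fun s i => reprog s (x i) (y i)) π := by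
  induction l with
  | nil => intro π; rfl
  | cons a t ih =>
      intro π
      simp only [List.foldl_cons]
      rw [reprog_mul σ π (x a) (y a)]
      exact ih _

lemma reprogVec_mul {k : ℕ} (σ π : Equiv.Perm X) (x y : Fin k → X) :
    reprogVec (σ * π) x (fun i => σ (y i)) = σ * reprogVec π x y := by
  unfold reprogVec
  exact foldl_mul σ x y _ π

lemma isGood_mul {k : ℕ} (σ π : Equiv.Perm X) (x y : Fin k → X) :
    IsGood (σ * π) x (fun i => σ (y i)) ↔ IsGood π x y := by
  unfold IsGood
  constructor
  · rintro ⟨h1, h2, h3⟩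
    refine ⟨h1, fun i j hij => h2 (by simp [hij]), fun i j h => h3 i j ?_⟩
    simpa [Equiv.Perm.mul_apply] using congrArg σ h
  · rintro ⟨h1, h2, h3⟩
    refine ⟨h1, fun i j hij => h2 (σ.injective hij), fun i j h => h3 i j ?_⟩
    simpa [Equiv.Perm.mul_apply] using σ.injective h

/-- Uniformity of the reprogrammed permutation: when `(π, π*)` is drawn uniformly
from the good pairs `G[x⃗*]`, the permutation `π[x₁* → π*(x₁*)]...[x_k* → π*(x_k*)]`
is uniformly distributed: every target permutation is attained equally often. -/
theorem reprogVec_uniform {k : ℕ} (x : Fin k → X) (hx : Function.Injective x)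
    (τ₁ τ₂ : Equiv.Perm X) :
    (Finset.univ.filter (fun p : Equiv.Perm X × Equiv.Perm X =>
        IsGood p.1 x (fun j => p.2 (x j)) ∧
          reprogVec p.1 x (fun j => p.2 (x j)) = τ₁)).card
      = (Finset.univ.filter (fun p : Equiv.Perm X × Equiv.Perm X =>
        IsGood p.1 x (fun j => p.2 (x j)) ∧
          reprogVec p.1 x (fun j => p.2 (x j)) = τ₂)).card := by
  set σ := τ₂ * τ₁⁻¹ with hσ
  apply Finset.card_bij' (fun p _ => (σ * p.1, σ * p.2))
    (fun p _ => (σ⁻¹ * p.1, σ⁻¹ * p.2))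
  · rintro ⟨π, π'⟩ hp
    simp only [Finset.mem_filter, Finset.mem_univ, true_and] at hp ⊢
    obtain ⟨hg, hr⟩ := hp
    have hg' : IsGood (σ * π) x (fun j => (σ * π') (x j)) := by
      simpa [Equiv.Perm.mul_apply] using (isGood_mul σ π x (fun j => π' (x j))).2 hg
    refine ⟨hg', ?_⟩
    have := reprogVec_mul σ π x (fun j => π' (x j))
    simp only [Equiv.Perm.mul_apply]
    rw [show (fun j => σ (π' (x j))) = (fun j => σ ((fun i => π' (x i)) j)) from rfl]
    rw [this, hr, hσ]
    group
  · rintro ⟨π, π'⟩ hp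
    simp only [Finset.mem_filter, Finset.mem_univ, true_and] at hp ⊢
    obtain ⟨hg, hr⟩ := hp
    have hg' : IsGood (σ⁻¹ * π) x (fun j => (σ⁻¹ * π') (x j)) := by
      simpa [Equiv.Perm.mul_apply] using (isGood_mul σ⁻¹ π x (fun j => π' (x j))).2 hg
    refine ⟨hg', ?_⟩
    have := reprogVec_mul σ⁻¹ π x (fun j => π' (x j))
    simp only [Equiv.Perm.mul_apply]
    rw [show (fun j => σ⁻¹ (π' (x j))) = (fun j => σ⁻¹ ((fun i => π' (x i)) j)) from rfl]
    rw [this, hr, hσ]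
    group
  · rintro ⟨π, π'⟩ _; simp [← mul_assoc]
  · rintro ⟨π, π'⟩ _; simp [← mul_assoc]
end

section
/- Let N ≥ 1 and let c_1 ≥ 0 and suppose N < 2^c. Then 1 − ∏_{i=1}^{N} ((1 − (i+1)/2^c) / (1 − i/(2^r · 2^c))) ≤ N(N+1)/2^c, for any nonnegative integers r, c such that all factors in the product are nonnegative. In particular, 1 − (1 − (N+1)/2^c)^N ≤ N(N+1)/2^c. -/
open Finset

lemma sponge_aux (N c : ℕ) (hNc : N < 2 ^ c) :
    1 - (N : ℝ) * ((N : ℝ) + 1) / 2 ^ c ≤ (1 - ((N : ℝ) + 1) / 2 ^ c) ^ N := by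
  have h2c : (0 : ℝ) < 2 ^ c := by positivity
  have ht : ((N : ℝ) + 1) / 2 ^ c ≤ 1 := by
    rw [div_le_one h2c]
    exact_mod_cast Nat.succ_le_of_lt hNc
  have := one_add_mul_le_pow (a := -(((N : ℝ) + 1) / 2 ^ c)) (by linarith) N
  have hrw : (1 : ℝ) + (N : ℝ) * -(((N : ℝ) + 1) / 2 ^ c)
      = 1 - (N : ℝ) * ((N : ℝ) + 1) / 2 ^ c := by ring
  rw [hrw] at this
  simpa [sub_eq_add_neg] using this

/-- The indifferentiability bound simplification: for `1 ≤ N < 2^c`,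
`1 − ∏_{i=1}^{N} ((1 − (i+1)/2^c)/(1 − i/(2^r·2^c))) ≤ N(N+1)/2^c`, and in
particular `1 − (1 − (N+1)/2^c)^N ≤ N(N+1)/2^c`. -/
theorem sponge_bound (N r c : ℕ) (hN : 1 ≤ N) (hNc : N < 2 ^ c) :
    (1 - ∏ i ∈ Finset.Icc 1 N,
        ((1 - ((i : ℝ) + 1) / 2 ^ c) / (1 - (i : ℝ) / (2 ^ r * 2 ^ c)))
      ≤ (N : ℝ) * ((N : ℝ) + 1) / 2 ^ c) ∧
    (1 - (1 - ((N : ℝ) + 1) / 2 ^ c) ^ N ≤ (N : ℝ) * ((N : ℝ) + 1) / 2 ^ c) := by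
  have h2c : (0 : ℝ) < 2 ^ c := by positivity
  have h2rc : (0 : ℝ) < 2 ^ r * 2 ^ c := by positivity
  have h2r1 : (1 : ℝ) ≤ 2 ^ r := one_le_pow₀ (by norm_num)
  have hNle : (N : ℝ) + 1 ≤ 2 ^ c := by exact_mod_cast Nat.succ_le_of_lt hNc
  have ht0 : (0 : ℝ) ≤ 1 - ((N : ℝ) + 1) / 2 ^ c := by
    rw [sub_nonneg, div_le_one h2c]; exact hNle
  have haux := sponge_aux N c hNc
  constructor
  · have key : (1 - ((N : ℝ) + 1) / 2 ^ c) ^ N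
        ≤ ∏ i ∈ Finset.Icc 1 N,
          ((1 - ((i : ℝ) + 1) / 2 ^ c) / (1 - (i : ℝ) / (2 ^ r * 2 ^ c))) := by
      have hcard : (Finset.Icc 1 N).card = N := by simp
      calc (1 - ((N : ℝ) + 1) / 2 ^ c) ^ N
          = ∏ _i ∈ Finset.Icc 1 N, (1 - ((N : ℝ) + 1) / 2 ^ c) := by
            rw [Finset.prod_const, hcard]
        _ ≤ _ := by
            apply Finset.prod_le_prod (fun i _ => ht0)
            intro i hi
            obtain ⟨_, hi2⟩ := Finset.mem_Icc.mp hi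
            have hiN : (i : ℝ) ≤ N := by exact_mod_cast hi2
            have hnum : 1 - ((N : ℝ) + 1) / 2 ^ c ≤ 1 - ((i : ℝ) + 1) / 2 ^ c := by
              have : ((i : ℝ) + 1) / 2 ^ c ≤ ((N : ℝ) + 1) / 2 ^ c :=
                div_le_div_of_nonneg_right (by linarith) h2c.le
              linarith
            have hden0 : (0 : ℝ) < 1 - (i : ℝ) / (2 ^ r * 2 ^ c) := by
              rw [sub_pos, div_lt_one h2rc]
              nlinarith
            have hden1 : 1 - (i : ℝ) / (2 ^ r * 2 ^ c) ≤ 1 := by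
              have : (0:ℝ) ≤ (i : ℝ) / (2 ^ r * 2 ^ c) := by positivity
              linarith
            have hnum0 : (0 : ℝ) ≤ 1 - ((i : ℝ) + 1) / 2 ^ c := by linarith
            rw [le_div_iff₀ hden0]
            nlinarith
    linarith
  · nlinarith
end
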